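/- (Lemma: category-recursions in MGs.) Let I be a category-recursion free CFG with categories and G the minimalist grammar constructed from I by Instructions 5–8. Let a be an item of G (lexical or derived) and b an item derived from a such that 𝒞(a) = 𝒞(b) and b is part of a legal derivation tree of G. Then b is an adapted derivation of a, i.e. every merger applied externally in the derivation from a to b is an adapter item (equivalently, the category remains 𝒞(a) at every intermediate step of the derivation from a to b). -/

import Mathlib

/-! ### Context-free grammars -/

/-- One-step rewriting for a set of context-free rules: replace one occurrence of a
nonterminal `A` by the right-hand side of one of its rules. -/
def CFGProduces {N T : Type} (rules : Set (N × List (N ⊕ T)))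
    (u v : List (N ⊕ T)) : Prop :=
  ∃ (A : N) (α p s : List (N ⊕ T)),
    (A, α) ∈ rules ∧ u = p ++ Sum.inl A :: s ∧ v = p ++ α ++ s

/-- The derivation relation `⇒*`: reflexive-transitive closure of one-step rewriting. -/
def CFGDerives {N T : Type} (rules : Set (N × List (N ⊕ T))) :
    List (N ⊕ T) → List (N ⊕ T) → Prop :=
  Relation.ReflTransGen (CFGProduces rules)

/-! ### Minimalist grammars (Stabler 1997) -/

/-- Syntactic features of a minimalist grammar over categories `C` and
licensee/licensor names `L`: selectors `=c`, categories `c`, licensors `+x`,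
licensees `−x`. -/
inductive Feature (C L : Type) : Type where
  | sel : C → Feature C L
  | cat : C → Feature C L
  | pos : L → Feature C L
  | neg : L → Feature C L

/-- An MG item `⟨exp :: feats⟩` (lexical, `isLex = true`) or `⟨exp : feats⟩`
(derived, `isLex = false`). -/
structure MGItem (T C L : Type) : Type where
  exp : List T
  isLex : Bool
  feats : List (Feature C L)

/-- An MG expression: a chain consisting of a head item and a list of
non-finally merged items. -/
abbrev MGExpr (T C L : Type) : Type := MGItem T C L × List (MGItem T C L)

/-- The merge operations: `MergeStep merger mergee output`. -/
inductive MergeStep {T C L : Type} :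
    MGExpr T C L → MGExpr T C L → MGExpr T C L → Prop where
  | merge1 (e₁ e₂ : List T) (f : C) (t : List (Feature C L)) (b : Bool)
      (q : List (MGItem T C L)) :
      MergeStep (⟨e₁, true, Feature.sel f :: t⟩, [])
        (⟨e₂, b, [Feature.cat f]⟩, q)
        (⟨e₁ ++ e₂, false, t⟩, q)
  | merge2 (e₁ e₂ : List T) (f : C) (t : List (Feature C L)) (b : Bool)
      (q₁ q₂ : List (MGItem T C L)) :
      MergeStep (⟨e₁, false, Feature.sel f :: t⟩, q₁)
        (⟨e₂, b, [Feature.cat f]⟩, q₂)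
        (⟨e₂ ++ e₁, false, t⟩, q₁ ++ q₂)
  | merge3 (e₁ e₂ : List T) (f : C) (t₁ t₂ : List (Feature C L)) (b₁ b₂ : Bool)
      (q₁ q₂ : List (MGItem T C L)) (ht₂ : t₂ ≠ []) :
      MergeStep (⟨e₁, b₁, Feature.sel f :: t₁⟩, q₁)
        (⟨e₂, b₂, Feature.cat f :: t₂⟩, q₂)
        (⟨e₁, false, t₁⟩, q₁ ++ ⟨e₂, false, t₂⟩ :: q₂)

/-- The move operations: `MoveStep input output`. -/
inductive MoveStep {T C L : Type} : MGExpr T C L → MGExpr T C L → Prop where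
  | move1 (e₁ e₂ : List T) (f : L) (t : List (Feature C L)) (b : Bool)
      (q₁ q₂ : List (MGItem T C L)) :
      MoveStep (⟨e₁, false, Feature.pos f :: t⟩, q₁ ++ ⟨e₂, b, [Feature.neg f]⟩ :: q₂)
        (⟨e₂ ++ e₁, false, t⟩, q₁ ++ q₂)
  | move2 (e₁ e₂ : List T) (f : L) (t t₂ : List (Feature C L)) (b : Bool)
      (q₁ q₂ : List (MGItem T C L)) (ht₂ : t₂ ≠ []) :
      MoveStep (⟨e₁, false, Feature.pos f :: t⟩, q₁ ++ ⟨e₂, b, Feature.neg f :: t₂⟩ :: q₂)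
        (⟨e₁, false, t⟩, q₁ ++ ⟨e₂, false, t₂⟩ :: q₂)

/-- Derivability of an expression from a lexicon `lex` by merge and move. -/
inductive MGDeriv {T C L : Type} (lex : Set (MGItem T C L)) : MGExpr T C L → Prop where
  | ax {i : MGItem T C L} : i ∈ lex → MGDeriv lex (i, [])
  | merge {A B F : MGExpr T C L} :
      MGDeriv lex A → MGDeriv lex B → MergeStep A B F → MGDeriv lex F
  | move {A F : MGExpr T C L} : MGDeriv lex A → MoveStep A F → MGDeriv lex F

/-- `E` is a premise of one application of a structure-building operation with
output `F` (all other premises being derivable from `lex`). -/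
def StepOf {T C L : Type} (lex : Set (MGItem T C L)) (E F : MGExpr T C L) : Prop :=
  (∃ B, MGDeriv lex B ∧ MergeStep E B F) ∨
  (∃ A, MGDeriv lex A ∧ MergeStep A E F) ∨
  MoveStep E F

/-- `F` is derived from `E` (possibly in several steps, `E` an ancestor of `F` in a
derivation tree). -/
def DerivedFrom {T C L : Type} (lex : Set (MGItem T C L)) (E F : MGExpr T C L) : Prop :=
  Relation.ReflTransGen (StepOf lex) E F

/-- `E` is part of (the construction of) a legal derivation tree: `E` is derivable
and some single item of category `CFin` can be derived from it. -/
def InLegalTree {T C L : Type} (lex : Set (MGItem T C L)) (CFin : C)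
    (E : MGExpr T C L) : Prop :=
  MGDeriv lex E ∧
    ∃ (e : List T) (b : Bool), DerivedFrom lex E (⟨e, b, [Feature.cat CFin]⟩, [])

/-- The language of the MG with lexicon `lex` and top category `CFin`:
exponents of legal expressions. -/
def MGLanguage {T C L : Type} (lex : Set (MGItem T C L)) (CFin : C) : Set (List T) :=
  {e : List T | ∃ b : Bool, MGDeriv lex (⟨e, b, [Feature.cat CFin]⟩, [])}

/-- The merge of the item `f` (merger, with chain `qf`) with the item `x` (mergee,
with chain `qx`) is part of the construction of a legal derivation tree. -/
def MergesInLegal {T C L : Type} (lex : Set (MGItem T C L)) (CFin : C)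
    (f x : MGItem T C L) : Prop :=
  ∃ (qf qx : List (MGItem T C L)) (F : MGExpr T C L),
    MGDeriv lex (f, qf) ∧ MGDeriv lex (x, qx) ∧
    MergeStep (f, qf) (x, qx) F ∧ InLegalTree lex CFin F

/-- `SelfTriggered lex E F`: `F` is a self-triggered derivation of `E`, i.e. all
merges involved are triggered by `E`'s own selectors (`E` is the iterated merger). -/
inductive SelfTriggered {T C L : Type} (lex : Set (MGItem T C L)) :
    MGExpr T C L → MGExpr T C L → Prop where
  | refl (E : MGExpr T C L) : SelfTriggered lex E E
  | merge {E A B F : MGExpr T C L} :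
      SelfTriggered lex E A → MGDeriv lex B → MergeStep A B F → SelfTriggered lex E F
  | move {E A F : MGExpr T C L} :
      SelfTriggered lex E A → MoveStep A F → SelfTriggered lex E F

/-- `AdaptedFrom lex adapters E F`: `F` is an adapted derivation of `E`, i.e. a
derivation of `E` in which every externally triggered merge is triggered by an
adapter item. -/
inductive AdaptedFrom {T C L : Type} (lex adapters : Set (MGItem T C L)) :
    MGExpr T C L → MGExpr T C L → Prop where
  | refl (E : MGExpr T C L) : AdaptedFrom lex adapters E E
  | selfMerge {E A B F : MGExpr T C L} :
      AdaptedFrom lex adapters E A → MGDeriv lex B → MergeStep A B F →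
      AdaptedFrom lex adapters E F
  | adapterMerge {E B F : MGExpr T C L} {a : MGItem T C L} :
      a ∈ adapters → AdaptedFrom lex adapters E B → MergeStep (a, []) B F →
      AdaptedFrom lex adapters E F
  | move {E A F : MGExpr T C L} :
      AdaptedFrom lex adapters E A → MoveStep A F → AdaptedFrom lex adapters E F

/-- The features of one selector-licensor block `=𝒞, +a₁, …, +aₖ`. -/
def blockFeats {C L : Type} (B : C × List L) : List (Feature C L) :=
  Feature.sel B.1 :: B.2.map Feature.pos

/-- The feature list consisting of the selector-licensor blocks `Bs`, the category
`c` and the licensees `ts`: `A₁, …, Aₙ, 𝒞, −t₁, …, −tₘ`. -/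
def itemFeats {C L : Type} (Bs : List (C × List L)) (c : C) (ts : List L) :
    List (Feature C L) :=
  (Bs.map blockFeats).flatten ++ Feature.cat c :: ts.map Feature.neg

/-! ### The input CFG (output of Instructions 1–4) and the construction
(Instructions 5–8) -/

/-- A CFG with categories as prepared by Instructions 1–4: rules with categories,
a start symbol whose rules have the top category `CFin`, a unique target category
for every nonterminal, and a classification of the nonterminals into free and
restricted ones. -/
structure PreppedCFG (N T Cat : Type) : Type where
  rules : Set (N × List (N ⊕ T))
  ruleCat : N × List (N ⊕ T) → Cat
  start : N
  CFin : Cat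
  target : N → Cat
  Free : N → Prop

namespace PreppedCFG

variable {N T Cat : Type}

/-- The language of the underlying CFG. -/
def language (P : PreppedCFG N T Cat) : Set (List T) :=
  {w : List T | CFGDerives P.rules [Sum.inl P.start] (w.map Sum.inr)}

/-- Well-formedness of the output of Instructions 1–4: the category of each rule is
the target category of its producer; the start symbol targets `CFin`; every free
nonterminal derives every word of its target category; and every rule is terminal,
right-free, left-restricted, or two-handed free. -/
def WellShaped (P : PreppedCFG N T Cat) : Prop :=
  (∀ r ∈ P.rules, P.ruleCat r = P.target r.1) ∧
  P.target P.start = P.CFin ∧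
  (∀ X : N, P.Free X → ∀ r ∈ P.rules, P.target r.1 = P.target X → (X, r.2) ∈ P.rules) ∧
  (∀ r ∈ P.rules,
    (∃ w : List T, r.2 = w.map Sum.inr) ∨
    (∃ (w : List T) (X : N), P.Free X ∧ r.2 = w.map Sum.inr ++ [Sum.inl X]) ∨
    (∃ (Y : N) (w : List T), ¬ P.Free Y ∧ r.2 = Sum.inl Y :: w.map Sum.inr) ∨
    (∃ (Y : N) (w : List T) (X : N), P.Free Y ∧ P.Free X ∧
      r.2 = Sum.inl Y :: (w.map Sum.inr ++ [Sum.inl X])))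

/-- Specification of the licensee ordering `ord` used in Instruction 6: `ord α c`
lists, without repetition, exactly the restricted nonterminals `R` generating the
CFG word `α` in category `c`. -/
def OrdSpec (P : PreppedCFG N T Cat) (ord : List (N ⊕ T) → Cat → List N) : Prop :=
  ∀ (α : List (N ⊕ T)) (c : Cat),
    (ord α c).Nodup ∧
    ∀ R : N, R ∈ ord α c ↔ (¬ P.Free R ∧ (R, α) ∈ P.rules ∧ P.target R = c)

/-- `WordItemOf P ord A α it`: `it` is the word item (Instructions 5–6) representing
the CFG word `α` of the rule `A → α`; the licensee name `a_R` of a restricted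
nonterminal `R` is modelled as `R` itself. -/
inductive WordItemOf (P : PreppedCFG N T Cat) (ord : List (N ⊕ T) → Cat → List N) :
    N → List (N ⊕ T) → MGItem T Cat N → Prop where
  | terminal (A : N) (w : List T)
      (h : (A, (w.map Sum.inr : List (N ⊕ T))) ∈ P.rules) :
      WordItemOf P ord A (w.map Sum.inr)
        ⟨w, true, Feature.cat (P.target A) ::
          (ord (w.map Sum.inr) (P.target A)).map Feature.neg⟩
  | rightFree (A : N) (w : List T) (X : N) (hX : P.Free X)
      (h : (A, w.map Sum.inr ++ [Sum.inl X]) ∈ P.rules) :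
      WordItemOf P ord A (w.map Sum.inr ++ [Sum.inl X])
        ⟨w, true, Feature.sel (P.target X) :: Feature.cat (P.target A) ::
          (ord (w.map Sum.inr ++ [Sum.inl X]) (P.target A)).map Feature.neg⟩
  | leftRestricted (A Y : N) (w : List T) (hY : ¬ P.Free Y)
      (h : (A, Sum.inl Y :: w.map Sum.inr) ∈ P.rules) :
      WordItemOf P ord A (Sum.inl Y :: w.map Sum.inr)
        ⟨w, true, Feature.sel (P.target Y) :: Feature.pos Y ::
          Feature.cat (P.target A) ::
          (ord (Sum.inl Y :: w.map Sum.inr) (P.target A)).map Feature.neg⟩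
  | twoHanded (A Y X : N) (w : List T) (hY : P.Free Y) (hX : P.Free X)
      (h : (A, Sum.inl Y :: (w.map Sum.inr ++ [Sum.inl X])) ∈ P.rules) :
      WordItemOf P ord A (Sum.inl Y :: (w.map Sum.inr ++ [Sum.inl X]))
        ⟨w, true, Feature.sel (P.target X) :: Feature.sel (P.target Y) ::
          Feature.cat (P.target A) ::
          (ord (Sum.inl Y :: (w.map Sum.inr ++ [Sum.inl X])) (P.target A)).map
            Feature.neg⟩

/-- `it` is a word item of the constructed lexicon. -/
def IsWordItem (P : PreppedCFG N T Cat) (ord : List (N ⊕ T) → Cat → List N)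
    (it : MGItem T Cat N) : Prop :=
  ∃ (A : N) (α : List (N ⊕ T)), WordItemOf P ord A α it

/-- Remove adapters (Instruction 7): `⟨ε :: =𝒞, +a, 𝒞⟩` for each licensee `−a`
appearing in some word item of category `𝒞`. -/
def IsRemoveAdapter (P : PreppedCFG N T Cat) (ord : List (N ⊕ T) → Cat → List N)
    (it : MGItem T Cat N) : Prop :=
  ∃ (c : Cat) (a : N),
    (∃ jt : MGItem T Cat N, P.IsWordItem ord jt ∧ Feature.cat c ∈ jt.feats ∧
      Feature.neg a ∈ jt.feats) ∧
    it = ⟨[], true, [Feature.sel c, Feature.pos a, Feature.cat c]⟩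

/-- Select adapters (Instruction 8): `⟨ε :: =𝒞, +x, +t, 𝒞, −x⟩` for each licensee
`−x` and each nonempty sequence `−t` of licensees appearing behind `−x` in the
feature list of some word item of category `𝒞`. -/
def IsSelectAdapter (P : PreppedCFG N T Cat) (ord : List (N ⊕ T) → Cat → List N)
    (it : MGItem T Cat N) : Prop :=
  ∃ (c : Cat) (x : N) (t : List N), t ≠ [] ∧
    (∃ jt : MGItem T Cat N, P.IsWordItem ord jt ∧ Feature.cat c ∈ jt.feats ∧
      (Feature.neg x :: t.map Feature.neg) <:+ jt.feats) ∧
    it = ⟨[], true, Feature.sel c :: Feature.pos x :: t.map Feature.pos ++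
      [Feature.cat c, Feature.neg x]⟩

/-- `it` is an adapter item. -/
def IsAdapter (P : PreppedCFG N T Cat) (ord : List (N ⊕ T) → Cat → List N)
    (it : MGItem T Cat N) : Prop :=
  P.IsRemoveAdapter ord it ∨ P.IsSelectAdapter ord it

/-- The lexicon of the MG constructed by Instructions 5–8. -/
def MGLex (P : PreppedCFG N T Cat) (ord : List (N ⊕ T) → Cat → List N) :
    Set (MGItem T Cat N) :=
  {it | P.IsWordItem ord it ∨ P.IsAdapter ord it}

/-- Recursion-free: no nonterminal `A` admits a nonempty derivation `A ⇒⁺ ω`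
with `A` occurring in `ω`. -/
def RecFree (P : PreppedCFG N T Cat) : Prop :=
  ∀ (A : N) (ω : List (N ⊕ T)),
    Relation.TransGen (CFGProduces P.rules) [Sum.inl A] ω → Sum.inl A ∉ ω

/-- Category-recursion free: recursion-free and for every rule `A → α # 𝒞` and every
derivation `α ⇒* ω`, the string `ω` contains no nonterminal that is the left-hand
side of a rule of category `𝒞`. -/
def CatRecFree (P : PreppedCFG N T Cat) : Prop :=
  P.RecFree ∧
  ∀ r ∈ P.rules, ∀ ω : List (N ⊕ T), CFGDerives P.rules r.2 ω →
    ∀ B : N, Sum.inl B ∈ ω → ∀ r' ∈ P.rules, r'.1 = B → P.ruleCat r' ≠ P.ruleCat r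

end PreppedCFG


/-! ### Auxiliary development for Statement 13 -/

namespace Stmt13

variable {N T Cat : Type}

theorem cfgProduces_ctx {rules : Set (N × List (N ⊕ T))} {u v : List (N ⊕ T)}
    (h : CFGProduces rules u v) (p s : List (N ⊕ T)) :
    CFGProduces rules (p ++ u ++ s) (p ++ v ++ s) := by
  obtain ⟨A, γ, p', s', hr, rfl, rfl⟩ := h
  exact ⟨A, γ, p ++ p', s' ++ s, hr, by simp, by simp⟩

theorem cfgDerives_ctx {rules : Set (N × List (N ⊕ T))} {α ω : List (N ⊕ T)}
    (h : CFGDerives rules α ω) (p s : List (N ⊕ T)) :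
    CFGDerives rules (p ++ α ++ s) (p ++ ω ++ s) := by
  induction h with
  | refl => exact Relation.ReflTransGen.refl
  | tail _ h2 ih => exact ih.tail (cfgProduces_ctx h2 p s)

theorem derives_subst {rules : Set (N × List (N ⊕ T))} {S : N} {γ α ω : List (N ⊕ T)}
    (hr : (S, γ) ∈ rules) (hS : Sum.inl S ∈ α) (hγ : CFGDerives rules γ ω) :
    ∃ p s, CFGDerives rules α (p ++ ω ++ s) := by
  obtain ⟨p, s, rfl⟩ := List.append_of_mem hS
  exact ⟨p, s, Relation.ReflTransGen.head ⟨S, γ, p, s, hr, rfl, rfl⟩ (cfgDerives_ctx hγ p s)⟩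

section Main

variable (P : PreppedCFG N T Cat) (ord : List (N ⊕ T) → Cat → List N)

/-- Some rule of category `P.target A` derives a string containing a nonterminal
that generates category `c`. -/
def JHist (α : List (N ⊕ T)) (c : Cat) : Prop :=
  ∃ ω B β, CFGDerives P.rules α ω ∧ Sum.inl B ∈ ω ∧ (B, β) ∈ P.rules ∧ P.target B = c

/-- Status of a chain item w.r.t. anchor `α` and current head category `cE`. -/
def ChOK (α : List (N ⊕ T)) (cE : Cat) (k : MGItem T Cat N) : Prop :=
  ∃ ls g, k.feats = ls.map Feature.neg ∧ ls ≠ [] ∧ (∀ R ∈ ls, P.target R = g) ∧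
    ((g = cE ∧ ∀ R ∈ ls, (R, α) ∈ P.rules) ∨
     (∃ ω B β, CFGDerives P.rules α ω ∧ Sum.inl B ∈ ω ∧ (B, β) ∈ P.rules ∧
        P.target B = g ∧ ∀ R ∈ ls, (R, β) ∈ P.rules))

def NegsOK (α : List (N ⊕ T)) (c : Cat) (hs : List N) : Prop :=
  ∀ R ∈ hs, (R, α) ∈ P.rules ∧ P.target R = c

def SelPre (α : List (N ⊕ T)) (pre : List (Feature Cat N)) : Prop :=
  ∀ f ∈ pre, ∃ S : N, f = Feature.sel (P.target S) ∧ Sum.inl S ∈ α ∧ P.Free S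

/-- Normal state: head is selectors ++ category ++ licensees, anchored at a rule `(A, α)`. -/
def SDN (E : MGExpr T Cat N) (A : N) (α : List (N ⊕ T)) : Prop :=
  (A, α) ∈ P.rules ∧
  ∃ (pre : List (Feature Cat N)) (hs : List N), E.1.feats = pre ++ Feature.cat (P.target A) :: hs.map Feature.neg ∧
    SelPre P α pre ∧ NegsOK P α (P.target A) hs ∧
    ∀ k ∈ E.2, ChOK P α (P.target A) k

/-- Adapter-intermediate state: pending licensors `ys` before the category. -/
def SDXA (E : MGExpr T Cat N) (A : N) (α : List (N ⊕ T)) (ys : List N) : Prop :=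
  (A, α) ∈ P.rules ∧
  ∃ (hs : List N), E.1.feats = ys.map Feature.pos ++ Feature.cat (P.target A) :: hs.map Feature.neg ∧
    (∀ y ∈ ys, P.target y = P.target A) ∧
    (∀ R ∈ hs, ((R, α) ∈ P.rules ∨ R ∈ ys) ∧ P.target R = P.target A) ∧
    ∀ k ∈ E.2, ChOK P α (P.target A) k

/-- State right after a left-restricted merge, before the `+Y` move. -/
def SDX (E : MGExpr T Cat N) (A₀ : N) (α₀ : List (N ⊕ T)) (Am : N) (αm : List (N ⊕ T))
    (Y : N) : Prop :=
  (A₀, α₀) ∈ P.rules ∧ (Am, αm) ∈ P.rules ∧ Sum.inl Y ∈ αm ∧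
  P.target Y = P.target A₀ ∧
  ∃ (hs : List N), E.1.feats = Feature.pos Y :: Feature.cat (P.target Am) :: hs.map Feature.neg ∧
    NegsOK P αm (P.target Am) hs ∧
    ∀ k ∈ E.2, ChOK P α₀ (P.target A₀) k

def ADShape (it : MGItem T Cat N) : Prop :=
  P.IsAdapter ord it ∧
  ((∃ (c : Cat) (aa : N), P.target aa = c ∧
      it.feats = [Feature.sel c, Feature.pos aa, Feature.cat c]) ∨
   (∃ (c : Cat) (x : N) (ts : List N), P.target x = c ∧ (∀ y ∈ ts, P.target y = c) ∧
      it.feats = Feature.sel c :: Feature.pos x :: ts.map Feature.pos ++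
        [Feature.cat c, Feature.neg x]))

def LRShape (it : MGItem T Cat N) : Prop :=
  ∃ (A : N) (α : List (N ⊕ T)) (Y : N) (hs : List N), (A, α) ∈ P.rules ∧ Sum.inl Y ∈ α ∧
    NegsOK P α (P.target A) hs ∧
    it.feats = Feature.sel (P.target Y) :: Feature.pos Y :: Feature.cat (P.target A) ::
      hs.map Feature.neg

/-- Lexical special state: an adapter or a full left-restricted word item. -/
def SDL (E : MGExpr T Cat N) : Prop :=
  ∃ it, E = (it, []) ∧ (ADShape P ord it ∨ LRShape P it)

def Inv (E : MGExpr T Cat N) : Prop :=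
  (∃ A α, SDN P E A α) ∨ (∃ A α ys, SDXA P E A α ys) ∨
  (∃ A₀ α₀ Am αm Y, SDX P E A₀ α₀ Am αm Y) ∨ SDL P ord E

theorem jhist_step {S : N} {α' αm : List (N ⊕ T)} {c : Cat}
    (hSr : (S, α') ∈ P.rules) (hSm : Sum.inl S ∈ αm) (h : JHist P α' c) :
    JHist P αm c := by
  obtain ⟨ω, B, β, hd, hB, hβ, htB⟩ := h
  obtain ⟨p, s, hd'⟩ := derives_subst hSr hSm hd
  exact ⟨p ++ ω ++ s, B, β, hd', by simp [hB], hβ, htB⟩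

/-- A chain item status survives an anchor change through a slot `S`. -/
theorem chok_anchor {S : N} {α' αm : List (N ⊕ T)} {cE' cE₂ : Cat} {k : MGItem T Cat N}
    (hSr : (S, α') ∈ P.rules) (hSm : Sum.inl S ∈ αm) (hT : P.target S = cE')
    (h : ChOK P α' cE' k) : ChOK P αm cE₂ k := by
  obtain ⟨ls, g, hf, hne, htg, hcase⟩ := h
  refine ⟨ls, g, hf, hne, htg, Or.inr ?_⟩
  rcases hcase with ⟨hg, hall⟩ | ⟨ω, B, β, hd, hB, hβ, htB, hall⟩
  · exact ⟨αm, S, α', Relation.ReflTransGen.refl, hSm, hSr, by rw [hT, hg], hall⟩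
  · obtain ⟨p, s, hd'⟩ := derives_subst hSr hSm hd
    exact ⟨p ++ ω ++ s, B, β, hd', by simp [hB], hβ, htB, hall⟩

end Main

end Stmt13

namespace Stmt13

variable {N T Cat : Type}

theorem map_neg_cons {ls : List N} {f : N} {t : List (Feature Cat N)}
    (h : ls.map Feature.neg = Feature.neg f :: t) :
    ∃ ls', ls = f :: ls' ∧ t = ls'.map Feature.neg := by
  cases ls with
  | nil => simp at h
  | cons a l =>
    simp only [List.map_cons, List.cons.injEq, Feature.neg.injEq] at h
    exact ⟨l, by rw [h.1], h.2.symm⟩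

theorem cat_eq_of_mem {pre : List (Feature Cat N)} {c c₀ : Cat} {hs : List N}
    (hpre : ∀ f ∈ pre, ∀ c' : Cat, f ≠ Feature.cat c')
    (h : Feature.cat c ∈ pre ++ Feature.cat c₀ :: hs.map Feature.neg) : c = c₀ := by
  rcases List.mem_append.1 h with h1 | h1
  · exact absurd rfl (hpre _ h1 c)
  · rcases List.mem_cons.1 h1 with h2 | h2
    · injection h2
    · simp only [List.mem_map] at h2; obtain ⟨x, -, hx⟩ := h2; cases hx

section Main

variable (P : PreppedCFG N T Cat) (ord : List (N ⊕ T) → Cat → List N)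

theorem word_cat_eq {A : N} {α : List (N ⊕ T)} {jt : MGItem T Cat N} {c : Cat}
    (hw : PreppedCFG.WordItemOf P ord A α jt) (hc : Feature.cat c ∈ jt.feats) :
    c = P.target A := by
  cases hw <;> simp_all

theorem word_neg_mem {A : N} {α : List (N ⊕ T)} {jt : MGItem T Cat N} {y : N}
    (hw : PreppedCFG.WordItemOf P ord A α jt) (hn : Feature.neg y ∈ jt.feats) :
    y ∈ ord α (P.target A) := by
  cases hw <;> simp_all

end Main

end Stmt13

namespace Stmt13

variable {N T Cat : Type}

section Main

variable (P : PreppedCFG N T Cat) (ord : List (N ⊕ T) → Cat → List N)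

theorem negsOK_ord (hOrd : P.OrdSpec ord) (α : List (N ⊕ T)) (c : Cat) :
    NegsOK P α c (ord α c) := fun R hR =>
  ⟨(((hOrd α c).2 R).1 hR).2.1, (((hOrd α c).2 R).1 hR).2.2⟩

theorem ord_target (hOrd : P.OrdSpec ord) {α : List (N ⊕ T)} {c : Cat} {R : N}
    (h : R ∈ ord α c) : P.target R = c := ((((hOrd α c).2 R).1 h)).2.2

theorem adShape_of_isAdapter (hOrd : P.OrdSpec ord) {it : MGItem T Cat N}
    (hA : P.IsAdapter ord it) : ADShape P ord it := by
  refine ⟨hA, ?_⟩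
  rcases hA with ⟨c, a, ⟨jt, ⟨A'', α'', hw⟩, hc, hn⟩, hit⟩ | ⟨c, x, t, ht, ⟨jt, ⟨A'', α'', hw⟩, hc, hsuf⟩, hit⟩
  · left
    obtain rfl : c = P.target A'' := word_cat_eq P ord hw hc
    exact ⟨_, a, ord_target P ord hOrd (word_neg_mem P ord hw hn), by rw [hit]⟩
  · right
    obtain rfl : c = P.target A'' := word_cat_eq P ord hw hc
    refine ⟨_, x, t, ?_, ?_, by rw [hit]⟩
    · exact ord_target P ord hOrd (word_neg_mem P ord hw (hsuf.subset (by simp)))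
    · intro y hy
      refine ord_target P ord hOrd (word_neg_mem P ord hw (hsuf.subset ?_))
      simp only [List.mem_cons, List.mem_map]
      exact Or.inr ⟨y, hy, rfl⟩

theorem inv_ax (hOrd : P.OrdSpec ord) {it : MGItem T Cat N} (hi : it ∈ P.MGLex ord) :
    Inv P ord ((it, []) : MGExpr T Cat N) := by
  rcases hi with ⟨A, α, hw⟩ | hA
  · cases hw with
    | terminal w h =>
        exact Or.inl ⟨A, _, h, [], _, rfl, fun f hf => absurd hf List.not_mem_nil,
          negsOK_ord P ord hOrd _ _, by simp⟩
    | rightFree w X hX h =>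
        refine Or.inl ⟨A, _, h, [Feature.sel (P.target X)], _, rfl, ?_,
          negsOK_ord P ord hOrd _ _, by simp⟩
        intro f hf
        rw [List.mem_singleton] at hf
        exact ⟨X, hf, by simp, hX⟩
    | leftRestricted Y w hY h =>
        exact Or.inr (Or.inr (Or.inr ⟨_, rfl,
          Or.inr ⟨A, _, Y, _, h, by simp, negsOK_ord P ord hOrd _ _, rfl⟩⟩))
    | twoHanded Y X w hY hX h =>
        refine Or.inl ⟨A, _, h, [Feature.sel (P.target X), Feature.sel (P.target Y)], _, rfl,
          ?_, negsOK_ord P ord hOrd _ _, by simp⟩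
        intro f hf
        rcases List.mem_cons.1 hf with rfl | hf
        · exact ⟨X, rfl, by simp, hX⟩
        · rw [List.mem_singleton] at hf
          exact ⟨Y, hf, by simp, hY⟩
  · exact Or.inr (Or.inr (Or.inr ⟨_, rfl, Or.inl (adShape_of_isAdapter P ord hOrd hA)⟩))

end Main

end Stmt13

namespace Stmt13

variable {N T Cat : Type}

section Main

variable (P : PreppedCFG N T Cat) (ord : List (N ⊕ T) → Cat → List N)

theorem sdl_not_cat {E : MGExpr T Cat N} (h : SDL P ord E) {f : Cat}
    {t : List (Feature Cat N)} (hf : E.1.feats = Feature.cat f :: t) : False := by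
  obtain ⟨it, rfl, hsh | hsh⟩ := h
  · rcases hsh with ⟨-, ⟨c, aa, -, he⟩ | ⟨c, x, ts, -, -, he⟩⟩ <;> rw [he] at hf <;> cases hf
  · obtain ⟨A, α, Y, hs, -, -, -, he⟩ := hsh
    rw [he] at hf; cases hf

theorem mergee_extract {E : MGExpr T Cat N} (h : Inv P ord E) {f : Cat}
    {t₂ : List (Feature Cat N)} (hf : E.1.feats = Feature.cat f :: t₂) :
    ∃ (A' : N) (α' : List (N ⊕ T)) (hs' : List N), (A', α') ∈ P.rules ∧ P.target A' = f ∧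
      t₂ = hs'.map Feature.neg ∧ NegsOK P α' f hs' ∧ ∀ k ∈ E.2, ChOK P α' f k := by
  rcases h with ⟨A, α, hr, pre, hs, hfe, hSel, hNeg, hch⟩ |
    ⟨A, α, ys, hr, hs, hfe, hys, hNeg, hch⟩ |
    ⟨A₀, α₀, Am, αm, Y, h₁, h₂, h₃, h₄, hs, hfe, hNeg, hch⟩ | hL
  · rw [hfe] at hf
    cases pre with
    | nil =>
      simp only [List.nil_append, List.cons.injEq, Feature.cat.injEq] at hf
      obtain ⟨rfl, rfl⟩ := hf
      exact ⟨A, α, hs, hr, rfl, rfl, hNeg, hch⟩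
    | cons p0 pre' =>
      obtain ⟨S, hSe, -, -⟩ := hSel p0 (List.mem_cons_self)
      rw [List.cons_append, List.cons.injEq] at hf
      rw [hSe] at hf
      exact (nomatch hf.1)
  · rw [hfe] at hf
    cases ys with
    | nil =>
      simp only [List.map_nil, List.nil_append, List.cons.injEq, Feature.cat.injEq] at hf
      obtain ⟨rfl, rfl⟩ := hf
      refine ⟨A, α, hs, hr, rfl, rfl, fun R hR => ⟨?_, (hNeg R hR).2⟩, hch⟩
      rcases (hNeg R hR).1 with h | h
      · exact h
      · cases h
    | cons y ys' =>
      rw [List.map_cons, List.cons_append, List.cons.injEq] at hf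
      exact (nomatch hf.1)
  · rw [hfe] at hf
    injection hf with h1 _
    exact (nomatch h1)
  · exact absurd hf (fun hf => sdl_not_cat P ord hL hf)

theorem sdn_merger (hWS : P.WellShaped) {E : MGExpr T Cat N} {Am : N} {αm : List (N ⊕ T)}
    (h : SDN P E Am αm) {f : Cat} {t : List (Feature Cat N)}
    (hf : E.1.feats = Feature.sel f :: t)
    {A' : N} {α' : List (N ⊕ T)} (hr' : (A', α') ∈ P.rules) (hA' : P.target A' = f) :
    (∃ S, Sum.inl S ∈ αm ∧ (S, α') ∈ P.rules ∧ P.target S = f) ∧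
    ∃ (pre' : List (Feature Cat N)) (hs : List N),
      t = pre' ++ Feature.cat (P.target Am) :: hs.map Feature.neg ∧ SelPre P αm pre' ∧
      NegsOK P αm (P.target Am) hs ∧ ∀ k ∈ E.2, ChOK P αm (P.target Am) k := by
  obtain ⟨hr, pre, hs, hfe, hSel, hNeg, hch⟩ := h
  rw [hfe] at hf
  cases pre with
  | nil =>
    rw [List.nil_append] at hf
    injection hf with h1 _
    exact (nomatch h1)
  | cons p0 pre' =>
    rw [List.cons_append, List.cons.injEq] at hf
    obtain ⟨S, hSe, hSm, hSfree⟩ := hSel p0 (List.mem_cons_self)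
    have hTS : P.target S = f := by
      have h1 := hf.1
      rw [hSe] at h1
      simpa using h1
    refine ⟨⟨S, hSm, ?_, hTS⟩, pre', hs, hf.2.symm, fun g hg => hSel g (List.mem_cons_of_mem _ hg), hNeg, hch⟩
    exact hWS.2.2.1 S hSfree (A', α') hr' (by simpa using hA'.trans hTS.symm)

end Main

end Stmt13

namespace Stmt13

variable {N T Cat : Type}

section Main

variable (P : PreppedCFG N T Cat) (ord : List (N ⊕ T) → Cat → List N)

theorem chok_leftover {α' : List (N ⊕ T)} {c : Cat} {hs' : List N} (hne : hs' ≠ [])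
    (hB3 : NegsOK P α' c hs') (e₂ : List T) :
    ChOK P α' c ⟨e₂, false, hs'.map Feature.neg⟩ :=
  ⟨hs', c, rfl, hne, fun R hR => (hB3 R hR).2, Or.inl ⟨rfl, fun R hR => (hB3 R hR).1⟩⟩

theorem merge_master_N (hWS : P.WellShaped) {A B F : MGExpr T Cat N}
    (hstep : MergeStep A B F) {Am : N} {αm : List (N ⊕ T)} (hN : SDN P A Am αm)
    {A' : N} {α' : List (N ⊕ T)} {hs' : List N} (hr' : (A', α') ∈ P.rules)
    (hB2 : B.1.feats = Feature.cat (P.target A') :: hs'.map Feature.neg)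
    (hB3 : NegsOK P α' (P.target A') hs')
    (hB4 : ∀ k ∈ B.2, ChOK P α' (P.target A') k) :
    SDN P F Am αm ∧ ∃ S, Sum.inl S ∈ αm ∧ (S, α') ∈ P.rules ∧ P.target S = P.target A' := by
  cases hstep with
  | merge1 e₁ e₂ f t b q =>
    simp only [List.cons.injEq, Feature.cat.injEq] at hB2
    obtain ⟨rfl, -⟩ := hB2
    obtain ⟨⟨S, hSm, hSr, hTS⟩, pre', hs, ht, hSel', hNeg', -⟩ :=
      sdn_merger P hWS hN rfl hr' rfl
    refine ⟨⟨hN.1, pre', hs, ht, hSel', hNeg', fun k hk => ?_⟩, S, hSm, hSr, hTS⟩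
    exact chok_anchor P hSr hSm hTS (hB4 k hk)
  | merge2 e₁ e₂ f t b q₁ q₂ =>
    simp only [List.cons.injEq, Feature.cat.injEq] at hB2
    obtain ⟨rfl, -⟩ := hB2
    obtain ⟨⟨S, hSm, hSr, hTS⟩, pre', hs, ht, hSel', hNeg', hch'⟩ :=
      sdn_merger P hWS hN rfl hr' rfl
    refine ⟨⟨hN.1, pre', hs, ht, hSel', hNeg', fun k hk => ?_⟩, S, hSm, hSr, hTS⟩
    rcases List.mem_append.1 hk with hk | hk
    · exact hch' k hk
    · exact chok_anchor P hSr hSm hTS (hB4 k hk)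
  | merge3 e₁ e₂ f t₁ t₂ b₁ b₂ q₁ q₂ ht₂ =>
    simp only [List.cons.injEq, Feature.cat.injEq] at hB2
    obtain ⟨rfl, ht₂eq⟩ := hB2
    obtain ⟨⟨S, hSm, hSr, hTS⟩, pre', hs, ht, hSel', hNeg', hch'⟩ :=
      sdn_merger P hWS hN rfl hr' rfl
    have hne : hs' ≠ [] := by
      intro h; rw [h] at ht₂eq; exact ht₂ (by simpa using ht₂eq)
    refine ⟨⟨hN.1, pre', hs, ht, hSel', hNeg', fun k hk => ?_⟩, S, hSm, hSr, hTS⟩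
    rcases List.mem_append.1 hk with hk | hk
    · exact hch' k hk
    · rcases List.mem_cons.1 hk with rfl | hk
      · rw [ht₂eq]
        exact chok_anchor P hSr hSm hTS (chok_leftover P hne hB3 e₂)
      · exact chok_anchor P hSr hSm hTS (hB4 k hk)

theorem merge_master_LR {A B F : MGExpr T Cat N} (hstep : MergeStep A B F)
    (hL : A.2 = []) {A₁ : N} {α₁ : List (N ⊕ T)} {Y : N} {hsm : List N}
    (hr₁ : (A₁, α₁) ∈ P.rules) (hY : Sum.inl Y ∈ α₁)
    (hnm : NegsOK P α₁ (P.target A₁) hsm)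
    (hfe : A.1.feats = Feature.sel (P.target Y) :: Feature.pos Y ::
      Feature.cat (P.target A₁) :: hsm.map Feature.neg)
    {A' : N} {α' : List (N ⊕ T)} {hs' : List N} (hr' : (A', α') ∈ P.rules)
    (hB2 : B.1.feats = Feature.cat (P.target A') :: hs'.map Feature.neg)
    (hB3 : NegsOK P α' (P.target A') hs')
    (hB4 : ∀ k ∈ B.2, ChOK P α' (P.target A') k) :
    SDX P F A' α' A₁ α₁ Y := by
  cases hstep with
  | merge1 e₁ e₂ f t b q =>
    simp only [List.cons.injEq, Feature.cat.injEq] at hB2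
    obtain ⟨rfl, -⟩ := hB2
    simp only [List.cons.injEq, Feature.sel.injEq] at hfe
    obtain ⟨hfY, hteq⟩ := hfe
    exact ⟨hr', hr₁, hY, hfY.symm, hsm, hteq, hnm, hB4⟩
  | merge2 e₁ e₂ f t b q₁ q₂ =>
    simp only [List.cons.injEq, Feature.cat.injEq] at hB2
    obtain ⟨rfl, -⟩ := hB2
    simp only [List.cons.injEq, Feature.sel.injEq] at hfe
    obtain ⟨hfY, hteq⟩ := hfe
    have hq₁ : q₁ = [] := hL
    subst hq₁
    refine ⟨hr', hr₁, hY, hfY.symm, hsm, hteq, hnm, fun k hk => hB4 k ?_⟩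
    simpa using hk
  | merge3 e₁ e₂ f t₁ t₂ b₁ b₂ q₁ q₂ ht₂ =>
    simp only [List.cons.injEq, Feature.cat.injEq] at hB2
    obtain ⟨rfl, ht₂eq⟩ := hB2
    simp only [List.cons.injEq, Feature.sel.injEq] at hfe
    obtain ⟨hfY, hteq⟩ := hfe
    have hq₁ : q₁ = [] := hL
    subst hq₁
    have hne : hs' ≠ [] := by
      intro h; rw [h] at ht₂eq; exact ht₂ (by simpa using ht₂eq)
    refine ⟨hr', hr₁, hY, hfY.symm, hsm, hteq, hnm, fun k hk => ?_⟩
    rcases List.mem_cons.1 (by simpa using hk) with rfl | hk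
    · rw [ht₂eq]; exact chok_leftover P hne hB3 e₂
    · exact hB4 k hk

theorem merge_master_AD {A B F : MGExpr T Cat N} (hstep : MergeStep A B F)
    (hL : A.2 = [])
    (hsh : (∃ (c : Cat) (aa : N), P.target aa = c ∧
        A.1.feats = [Feature.sel c, Feature.pos aa, Feature.cat c]) ∨
      (∃ (c : Cat) (x : N) (ts : List N), P.target x = c ∧ (∀ y ∈ ts, P.target y = c) ∧
        A.1.feats = Feature.sel c :: Feature.pos x :: ts.map Feature.pos ++
          [Feature.cat c, Feature.neg x]))
    {A' : N} {α' : List (N ⊕ T)} {hs' : List N} (hr' : (A', α') ∈ P.rules)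
    (hB2 : B.1.feats = Feature.cat (P.target A') :: hs'.map Feature.neg)
    (hB3 : NegsOK P α' (P.target A') hs')
    (hB4 : ∀ k ∈ B.2, ChOK P α' (P.target A') k) :
    ∃ ys, SDXA P F A' α' ys := by
  cases hstep with
  | merge1 e₁ e₂ f t b q =>
    simp only [List.cons.injEq, Feature.cat.injEq] at hB2
    obtain ⟨rfl, -⟩ := hB2
    rcases hsh with ⟨c, aa, haa, hfe⟩ | ⟨c, x, ts, hx, hts, hfe⟩
    · simp only [List.cons.injEq, Feature.sel.injEq] at hfe
      obtain ⟨hfc, hteq⟩ := hfe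
      subst hfc
      refine ⟨[aa], hr', [], ?_, by simpa using haa, by simp, hB4⟩
      simp [hteq]
    · simp only [List.cons_append, List.cons.injEq, Feature.sel.injEq] at hfe
      obtain ⟨hfc, hteq⟩ := hfe
      subst hfc
      refine ⟨x :: ts, hr', [x], ?_, ?_, ?_, hB4⟩
      · simp only [List.map_cons, List.cons_append]
        rw [hteq]; simp
      · intro y hy
        rcases List.mem_cons.1 hy with rfl | hy
        · exact hx
        · exact hts y hy
      · intro R hR
        rcases List.mem_singleton.1 hR with rfl
        exact ⟨Or.inr (List.mem_cons_self), hx⟩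
  | merge2 e₁ e₂ f t b q₁ q₂ =>
    simp only [List.cons.injEq, Feature.cat.injEq] at hB2
    obtain ⟨rfl, -⟩ := hB2
    have hq₁ : q₁ = [] := hL
    subst hq₁
    rcases hsh with ⟨c, aa, haa, hfe⟩ | ⟨c, x, ts, hx, hts, hfe⟩
    · simp only [List.cons.injEq, Feature.sel.injEq] at hfe
      obtain ⟨hfc, hteq⟩ := hfe
      subst hfc
      refine ⟨[aa], hr', [], ?_, by simpa using haa, by simp, fun k hk => hB4 k (by simpa using hk)⟩
      simp [hteq]
    · simp only [List.cons_append, List.cons.injEq, Feature.sel.injEq] at hfe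
      obtain ⟨hfc, hteq⟩ := hfe
      subst hfc
      refine ⟨x :: ts, hr', [x], ?_, ?_, ?_, fun k hk => hB4 k (by simpa using hk)⟩
      · simp only [List.map_cons, List.cons_append]
        rw [hteq]; simp
      · intro y hy
        rcases List.mem_cons.1 hy with rfl | hy
        · exact hx
        · exact hts y hy
      · intro R hR
        rcases List.mem_singleton.1 hR with rfl
        exact ⟨Or.inr (List.mem_cons_self), hx⟩
  | merge3 e₁ e₂ f t₁ t₂ b₁ b₂ q₁ q₂ ht₂ =>
    simp only [List.cons.injEq, Feature.cat.injEq] at hB2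
    obtain ⟨rfl, ht₂eq⟩ := hB2
    have hq₁ : q₁ = [] := hL
    subst hq₁
    have hne : hs' ≠ [] := by
      intro h; rw [h] at ht₂eq; exact ht₂ (by simpa using ht₂eq)
    have hchain : ∀ k ∈ (⟨e₂, false, t₂⟩ : MGItem T Cat N) :: q₂, ChOK P α' (P.target A') k := by
      intro k hk
      rcases List.mem_cons.1 hk with rfl | hk
      · rw [ht₂eq]; exact chok_leftover P hne hB3 e₂
      · exact hB4 k hk
    rcases hsh with ⟨c, aa, haa, hfe⟩ | ⟨c, x, ts, hx, hts, hfe⟩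
    · simp only [List.cons.injEq, Feature.sel.injEq] at hfe
      obtain ⟨hfc, hteq⟩ := hfe
      subst hfc
      refine ⟨[aa], hr', [], ?_, by simpa using haa, by simp, fun k hk => hchain k (by simpa using hk)⟩
      simp [hteq]
    · simp only [List.cons_append, List.cons.injEq, Feature.sel.injEq] at hfe
      obtain ⟨hfc, hteq⟩ := hfe
      subst hfc
      refine ⟨x :: ts, hr', [x], ?_, ?_, ?_, fun k hk => hchain k (by simpa using hk)⟩
      · simp only [List.map_cons, List.cons_append]
        rw [hteq]; simp
      · intro y hy
        rcases List.mem_cons.1 hy with rfl | hy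
        · exact hx
        · exact hts y hy
      · intro R hR
        rcases List.mem_singleton.1 hR with rfl
        exact ⟨Or.inr (List.mem_cons_self), hx⟩

end Main

end Stmt13

namespace Stmt13

variable {N T Cat : Type}

section Main

variable (P : PreppedCFG N T Cat) (ord : List (N ⊕ T) → Cat → List N)

theorem jhist_false (hWS : P.WellShaped) (hCRF : P.CatRecFree) {A : N}
    {α : List (N ⊕ T)} {c : Cat} (hr : (A, α) ∈ P.rules) (hA : P.target A = c)
    (h : JHist P α c) : False := by
  obtain ⟨ω, B, β, hd, hB, hβ, htB⟩ := h
  exact hCRF.2 (A, α) hr ω hd B hB (B, β) hβ rfl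
    (by rw [hWS.1 _ hβ, hWS.1 _ hr]; exact htB.trans hA.symm)

theorem move_master_X (hWS : P.WellShaped) (hCRF : P.CatRecFree) {A F : MGExpr T Cat N}
    (hmv : MoveStep A F) {A₀ : N} {α₀ : List (N ⊕ T)} {Am : N} {αm : List (N ⊕ T)} {Y : N}
    (hX : SDX P A A₀ α₀ Am αm Y) :
    (Y, α₀) ∈ P.rules ∧ SDN P F Am αm := by
  obtain ⟨hr₀, hrm, hYm, hTY, hs, hfe, hNeg, hch⟩ := hX
  cases hmv with
  | move1 e₁ e₂ f t b q₁ q₂ =>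
    simp only [List.cons.injEq, Feature.pos.injEq] at hfe
    obtain ⟨rfl, hteq⟩ := hfe
    have hk₀ := hch ⟨e₂, b, [Feature.neg f]⟩ (by simp)
    obtain ⟨ls, g, hlf, hlne, hltg, hcase⟩ := hk₀
    obtain ⟨ls', rfl, -⟩ := map_neg_cons (hlf.symm)
    have hg : g = P.target A₀ := by
      rw [← hltg f (List.mem_cons_self)]; exact hTY
    rcases hcase with ⟨-, hall⟩ | ⟨ω, B, β, hd, hB, hβ, htB, -⟩
    · have hYr : (f, α₀) ∈ P.rules := hall f (List.mem_cons_self)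
      refine ⟨hYr, hrm, [], hs, hteq, fun g hg => absurd hg List.not_mem_nil, hNeg,
        fun k hk => ?_⟩
      have hk' : k ∈ q₁ ++ ⟨e₂, b, [Feature.neg f]⟩ :: q₂ := by
        rcases List.mem_append.1 hk with h | h
        · exact List.mem_append.2 (Or.inl h)
        · exact List.mem_append.2 (Or.inr (List.mem_cons_of_mem _ h))
      exact chok_anchor P hYr hYm hTY (hch k hk')
    · exact absurd ⟨ω, B, β, hd, hB, hβ, htB.trans hg⟩
        (fun h => jhist_false P hWS hCRF hr₀ rfl h)
  | move2 e₁ e₂ f t t₂ b q₁ q₂ ht₂ =>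
    simp only [List.cons.injEq, Feature.pos.injEq] at hfe
    obtain ⟨rfl, hteq⟩ := hfe
    have hk₀ := hch ⟨e₂, b, Feature.neg f :: t₂⟩ (by simp)
    obtain ⟨ls, g, hlf, hlne, hltg, hcase⟩ := hk₀
    obtain ⟨ls', rfl, hmap⟩ := map_neg_cons (hlf.symm)
    have hg : g = P.target A₀ := by
      rw [← hltg f (List.mem_cons_self)]; exact hTY
    rcases hcase with ⟨-, hall⟩ | ⟨ω, B, β, hd, hB, hβ, htB, -⟩
    · have hYr : (f, α₀) ∈ P.rules := hall f (List.mem_cons_self)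
      have hls' : ls' ≠ [] := by
        intro h; rw [h] at hmap; exact ht₂ hmap
      refine ⟨hYr, hrm, [], hs, hteq, fun g hg => absurd hg List.not_mem_nil, hNeg,
        fun k hk => ?_⟩
      rcases List.mem_append.1 hk with h | h
      · exact chok_anchor P hYr hYm hTY
          (hch k (List.mem_append.2 (Or.inl h)))
      · rcases List.mem_cons.1 h with rfl | h
        · refine chok_anchor P hYr hYm hTY
            ⟨ls', g, hmap, hls', fun R hR => hltg R (List.mem_cons_of_mem _ hR), ?_⟩
          rw [hg]
          exact Or.inl ⟨rfl, fun R hR => hall R (List.mem_cons_of_mem _ hR)⟩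
        · exact chok_anchor P hYr hYm hTY
            (hch k (List.mem_append.2 (Or.inr (List.mem_cons_of_mem _ h))))
    · exact absurd ⟨ω, B, β, hd, hB, hβ, htB.trans hg⟩
        (fun h => jhist_false P hWS hCRF hr₀ rfl h)

theorem move_master_XA (hWS : P.WellShaped) (hCRF : P.CatRecFree) {A F : MGExpr T Cat N}
    (hmv : MoveStep A F) {A' : N} {α' : List (N ⊕ T)} {y : N} {ys' : List N}
    (hXA : SDXA P A A' α' (y :: ys')) :
    SDXA P F A' α' ys' := by
  obtain ⟨hr', hs, hfe, hys, hNeg, hch⟩ := hXA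
  rw [List.map_cons, List.cons_append] at hfe
  have hty : P.target y = P.target A' := hys y (List.mem_cons_self)
  cases hmv with
  | move1 e₁ e₂ f t b q₁ q₂ =>
    simp only [List.cons.injEq, Feature.pos.injEq] at hfe
    obtain ⟨rfl, hteq⟩ := hfe
    have hk₀ := hch ⟨e₂, b, [Feature.neg f]⟩ (by simp)
    obtain ⟨ls, g, hlf, hlne, hltg, hcase⟩ := hk₀
    obtain ⟨ls', rfl, -⟩ := map_neg_cons (hlf.symm)
    have hg : g = P.target A' := by
      rw [← hltg f (List.mem_cons_self)]; exact hty
    rcases hcase with ⟨-, hall⟩ | ⟨ω, B, β, hd, hB, hβ, htB, -⟩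
    · have hyr : (f, α') ∈ P.rules := hall f (List.mem_cons_self)
      refine ⟨hr', hs, hteq, fun z hz => hys z (List.mem_cons_of_mem _ hz), ?_, fun k hk => ?_⟩
      · intro R hR
        refine ⟨?_, (hNeg R hR).2⟩
        rcases (hNeg R hR).1 with h | h
        · exact Or.inl h
        · rcases List.mem_cons.1 h with rfl | h
          · exact Or.inl hyr
          · exact Or.inr h
      · have hk' : k ∈ q₁ ++ ⟨e₂, b, [Feature.neg f]⟩ :: q₂ := by
          rcases List.mem_append.1 hk with h | h
          · exact List.mem_append.2 (Or.inl h)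
          · exact List.mem_append.2 (Or.inr (List.mem_cons_of_mem _ h))
        exact hch k hk'
    · exact absurd ⟨ω, B, β, hd, hB, hβ, htB.trans hg⟩
        (fun h => jhist_false P hWS hCRF hr' rfl h)
  | move2 e₁ e₂ f t t₂ b q₁ q₂ ht₂ =>
    simp only [List.cons.injEq, Feature.pos.injEq] at hfe
    obtain ⟨rfl, hteq⟩ := hfe
    have hk₀ := hch ⟨e₂, b, Feature.neg f :: t₂⟩ (by simp)
    obtain ⟨ls, g, hlf, hlne, hltg, hcase⟩ := hk₀
    obtain ⟨ls', rfl, hmap⟩ := map_neg_cons (hlf.symm)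
    have hg : g = P.target A' := by
      rw [← hltg f (List.mem_cons_self)]; exact hty
    rcases hcase with ⟨-, hall⟩ | ⟨ω, B, β, hd, hB, hβ, htB, -⟩
    · have hyr : (f, α') ∈ P.rules := hall f (List.mem_cons_self)
      have hls' : ls' ≠ [] := by
        intro h; rw [h] at hmap; exact ht₂ hmap
      refine ⟨hr', hs, hteq, fun z hz => hys z (List.mem_cons_of_mem _ hz), ?_, fun k hk => ?_⟩
      · intro R hR
        refine ⟨?_, (hNeg R hR).2⟩
        rcases (hNeg R hR).1 with h | h
        · exact Or.inl h
        · rcases List.mem_cons.1 h with rfl | h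
          · exact Or.inl hyr
          · exact Or.inr h
      · rcases List.mem_append.1 hk with h | h
        · exact hch k (List.mem_append.2 (Or.inl h))
        · rcases List.mem_cons.1 h with rfl | h
          · refine ⟨ls', g, hmap, hls', fun R hR => hltg R (List.mem_cons_of_mem _ hR), ?_⟩
            exact Or.inl ⟨hg, fun R hR => hall R (List.mem_cons_of_mem _ hR)⟩
          · exact hch k (List.mem_append.2 (Or.inr (List.mem_cons_of_mem _ h)))
    · exact absurd ⟨ω, B, β, hd, hB, hβ, htB.trans hg⟩
        (fun h => jhist_false P hWS hCRF hr' rfl h)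

end Main

end Stmt13

namespace Stmt13

variable {N T Cat : Type}

section Main

variable (P : PreppedCFG N T Cat) (ord : List (N ⊕ T) → Cat → List N)

theorem inv_preserve_merge (hWS : P.WellShaped) {A B F : MGExpr T Cat N}
    (hstep : MergeStep A B F) (hIA : Inv P ord A) (hIB : Inv P ord B) :
    Inv P ord F := by
  have hBshape : ∃ f t₂, B.1.feats = Feature.cat f :: t₂ := by
    cases hstep <;> exact ⟨_, _, rfl⟩
  obtain ⟨f, t₂, hBf⟩ := hBshape
  obtain ⟨A', α', hs', hr', htA', ht₂, hB3, hB4⟩ := mergee_extract P ord hIB hBf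
  have hB2 : B.1.feats = Feature.cat (P.target A') :: hs'.map Feature.neg := by
    rw [hBf, htA', ht₂]
  have hB3' : NegsOK P α' (P.target A') hs' := by rw [htA']; exact hB3
  have hB4' : ∀ k ∈ B.2, ChOK P α' (P.target A') k := by rw [htA']; exact hB4
  have hAshape : ∃ f' t', A.1.feats = Feature.sel f' :: t' := by
    cases hstep <;> exact ⟨_, _, rfl⟩
  obtain ⟨f', t', hAf⟩ := hAshape
  rcases hIA with ⟨Am, αm, hN⟩ | ⟨Am, αm, ys, hXA⟩ | ⟨A₀, α₀, Am, αm, Y, hX⟩ | hL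
  · exact Or.inl ⟨Am, αm, (merge_master_N P hWS hstep hN hr' hB2 hB3' hB4').1⟩
  · exfalso
    obtain ⟨-, hs, hfe, -, -, -⟩ := hXA
    rw [hAf] at hfe
    cases ys with
    | nil =>
      rw [List.map_nil, List.nil_append] at hfe
      injection hfe with h1 _; exact (nomatch h1)
    | cons y ys' =>
      rw [List.map_cons, List.cons_append] at hfe
      injection hfe with h1 _; exact (nomatch h1)
  · exfalso
    obtain ⟨-, -, -, -, hs, hfe, -, -⟩ := hX
    rw [hAf] at hfe
    injection hfe with h1 _; exact (nomatch h1)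
  · obtain ⟨it, rfl, hsh | hsh⟩ := hL
    · obtain ⟨hAd, hsh'⟩ := hsh
      obtain ⟨ys, hXA⟩ := merge_master_AD P hstep rfl hsh' hr' hB2 hB3' hB4'
      exact Or.inr (Or.inl ⟨A', α', ys, hXA⟩)
    · obtain ⟨A₁, α₁, Y, hsm, hr₁, hY, hnm, hfe⟩ := hsh
      exact Or.inr (Or.inr (Or.inl ⟨A', α', A₁, α₁, Y,
        merge_master_LR P hstep rfl hr₁ hY hnm hfe hr' hB2 hB3' hB4'⟩))

theorem inv_preserve_move (hWS : P.WellShaped) (hCRF : P.CatRecFree) {A F : MGExpr T Cat N}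
    (hmv : MoveStep A F) (hIA : Inv P ord A) : Inv P ord F := by
  have hAshape : ∃ f t, A.1.feats = Feature.pos f :: t := by
    cases hmv <;> exact ⟨_, _, rfl⟩
  obtain ⟨f, t, hAf⟩ := hAshape
  rcases hIA with ⟨Am, αm, hN⟩ | ⟨Am, αm, ys, hXA⟩ | ⟨A₀, α₀, Am, αm, Y, hX⟩ | hL
  · exfalso
    obtain ⟨-, pre, hs, hfe, hSel, -, -⟩ := hN
    rw [hAf] at hfe
    cases pre with
    | nil =>
      rw [List.nil_append] at hfe
      injection hfe with h1 _; exact (nomatch h1)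
    | cons p0 pre' =>
      obtain ⟨S, hSe, -, -⟩ := hSel p0 (List.mem_cons_self)
      rw [List.cons_append] at hfe
      injection hfe with h1 _
      rw [hSe] at h1; exact (nomatch h1)
  · cases ys with
    | nil =>
      exfalso
      obtain ⟨-, hs, hfe, -, -, -⟩ := hXA
      rw [hAf] at hfe
      rw [List.map_nil, List.nil_append] at hfe
      injection hfe with h1 _; exact (nomatch h1)
    | cons y ys' =>
      exact Or.inr (Or.inl ⟨Am, αm, ys', move_master_XA P hWS hCRF hmv hXA⟩)
  · exact Or.inl ⟨Am, αm, (move_master_X P hWS hCRF hmv hX).2⟩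
  · exfalso
    obtain ⟨it, heq, -⟩ := hL
    cases hmv <;> simp [Prod.ext_iff] at heq

theorem inv_of_deriv (hWS : P.WellShaped) (hOrd : P.OrdSpec ord) (hCRF : P.CatRecFree)
    {E : MGExpr T Cat N} (h : MGDeriv (P.MGLex ord) E) : Inv P ord E := by
  induction h with
  | ax hi => exact inv_ax P ord hOrd hi
  | merge _ _ hst ihA ihB => exact inv_preserve_merge P ord hWS hst ihA ihB
  | move _ hst ihA => exact inv_preserve_move P ord hWS hCRF hst ihA

end Main

end Stmt13

namespace Stmt13

variable {N T Cat : Type}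

section Main

variable (P : PreppedCFG N T Cat) (ord : List (N ⊕ T) → Cat → List N)

def PathInv (a : MGExpr T Cat N) (c : Cat) (E : MGExpr T Cat N) : Prop :=
  (AdaptedFrom (P.MGLex ord) {it | P.IsAdapter ord it} a E ∧
    ((∃ A α, SDN P E A α ∧ P.target A = c) ∨
     (∃ A α ys, SDXA P E A α ys ∧ P.target A = c) ∨
     (∃ A₀ α₀ Am αm Y, SDX P E A₀ α₀ Am αm Y ∧ P.target Am = c) ∨
     (SDL P ord E ∧ Feature.cat c ∈ E.1.feats)))
  ∨
  ((∃ A α, (SDN P E A α ∨ ∃ ys, SDXA P E A α ys) ∧ JHist P α c) ∨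
   (∃ A₀ α₀ Am αm Y, SDX P E A₀ α₀ Am αm Y ∧ (JHist P α₀ c ∨ P.target Y = c)))

theorem sdn_mergee {E : MGExpr T Cat N} {A : N} {α : List (N ⊕ T)} {f : Cat}
    {tB : List (Feature Cat N)} (hN : SDN P E A α) (hf : E.1.feats = Feature.cat f :: tB) :
    P.target A = f ∧ ∃ hs : List N, E.1.feats = Feature.cat (P.target A) :: hs.map Feature.neg ∧
      NegsOK P α (P.target A) hs ∧ ∀ k ∈ E.2, ChOK P α (P.target A) k := by
  obtain ⟨hr, pre, hs, hfe, hSel, hNeg, hch⟩ := hN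
  rw [hfe] at hf
  cases pre with
  | nil =>
    rw [List.nil_append] at hf
    injection hf with h1 _
    injection h1 with h1
    exact ⟨h1, hs, by rw [hfe]; rfl, hNeg, hch⟩
  | cons p0 pre' =>
    obtain ⟨S, hSe, -, -⟩ := hSel p0 (List.mem_cons_self)
    rw [List.cons_append] at hf
    injection hf with h1 _
    rw [hSe] at h1
    exact absurd h1 (fun h => (nomatch h))

theorem sdxa_mergee {E : MGExpr T Cat N} {A : N} {α : List (N ⊕ T)} {ys : List N} {f : Cat}
    {tB : List (Feature Cat N)} (hXA : SDXA P E A α ys)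
    (hf : E.1.feats = Feature.cat f :: tB) :
    P.target A = f ∧ ∃ hs : List N, E.1.feats = Feature.cat (P.target A) :: hs.map Feature.neg ∧
      NegsOK P α (P.target A) hs ∧ ∀ k ∈ E.2, ChOK P α (P.target A) k := by
  obtain ⟨hr, hs, hfe, hys, hNeg, hch⟩ := hXA
  rw [hfe] at hf
  cases ys with
  | nil =>
    rw [List.map_nil, List.nil_append] at hf
    injection hf with h1 _
    injection h1 with h1
    refine ⟨h1, hs, by rw [hfe]; rfl, fun R hR => ⟨?_, (hNeg R hR).2⟩, hch⟩
    rcases (hNeg R hR).1 with h | h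
    · exact h
    · exact absurd h List.not_mem_nil
  | cons y ys' =>
    rw [List.map_cons, List.cons_append] at hf
    injection hf with h1 _
    exact absurd h1 (fun h => (nomatch h))

theorem sdx_not_cat {E : MGExpr T Cat N} {A₀ : N} {α₀ : List (N ⊕ T)} {Am : N}
    {αm : List (N ⊕ T)} {Y : N} (hX : SDX P E A₀ α₀ Am αm Y) {f : Cat}
    {tB : List (Feature Cat N)} (hf : E.1.feats = Feature.cat f :: tB) : False := by
  obtain ⟨-, -, -, -, hs, hfe, -, -⟩ := hX
  rw [hfe] at hf
  injection hf with h1 _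
  exact (nomatch h1)

theorem sdn_not_pos {E : MGExpr T Cat N} {A : N} {α : List (N ⊕ T)} (hN : SDN P E A α)
    {f : N} {t : List (Feature Cat N)} (hf : E.1.feats = Feature.pos f :: t) : False := by
  obtain ⟨-, pre, hs, hfe, hSel, -, -⟩ := hN
  rw [hfe] at hf
  cases pre with
  | nil =>
    rw [List.nil_append] at hf
    injection hf with h1 _
    exact (nomatch h1)
  | cons p0 pre' =>
    obtain ⟨S, hSe, -, -⟩ := hSel p0 (List.mem_cons_self)
    rw [List.cons_append] at hf
    injection hf with h1 _
    rw [hSe] at h1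
    exact (nomatch h1)

end Main

end Stmt13

namespace Stmt13

variable {N T Cat : Type}

section Main

variable (P : PreppedCFG N T Cat) (ord : List (N ⊕ T) → Cat → List N)

theorem sdxa_not_sel {E : MGExpr T Cat N} {A : N} {α : List (N ⊕ T)} {ys : List N}
    (hXA : SDXA P E A α ys) {f : Cat} {t : List (Feature Cat N)}
    (hf : E.1.feats = Feature.sel f :: t) : False := by
  obtain ⟨-, hs, hfe, -, -, -⟩ := hXA
  rw [hf] at hfe
  cases ys with
  | nil =>
    rw [List.map_nil, List.nil_append] at hfe
    injection hfe with h1 _; exact (nomatch h1)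
  | cons y ys' =>
    rw [List.map_cons, List.cons_append] at hfe
    injection hfe with h1 _; exact (nomatch h1)

theorem sdx_not_sel {E : MGExpr T Cat N} {A₀ : N} {α₀ : List (N ⊕ T)} {Am : N}
    {αm : List (N ⊕ T)} {Y : N} (hX : SDX P E A₀ α₀ Am αm Y) {f : Cat}
    {t : List (Feature Cat N)} (hf : E.1.feats = Feature.sel f :: t) : False := by
  obtain ⟨-, -, -, -, hs, hfe, -, -⟩ := hX
  rw [hf] at hfe
  injection hfe with h1 _; exact (nomatch h1)

theorem sdl_not_cat' {E : MGExpr T Cat N} (hL : SDL P ord E) {f : Cat}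
    {t : List (Feature Cat N)} (hf : E.1.feats = Feature.cat f :: t) : False :=
  sdl_not_cat P ord hL hf

/-- Case: the path expression is the mergee of an external merger. -/
theorem path_step_mergee (hWS : P.WellShaped) (hOrd : P.OrdSpec ord) (hCRF : P.CatRecFree)
    {a : MGExpr T Cat N} {c : Cat} {Am E F : MGExpr T Cat N}
    (hDAm : MGDeriv (P.MGLex ord) Am) (hstep : MergeStep Am E F)
    {A_p : N} {α_p : List (N ⊕ T)} {hs_p : List N}
    (hrp : (A_p, α_p) ∈ P.rules)
    (hB2p : E.1.feats = Feature.cat (P.target A_p) :: hs_p.map Feature.neg)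
    (hB3p : NegsOK P α_p (P.target A_p) hs_p)
    (hB4p : ∀ k ∈ E.2, ChOK P α_p (P.target A_p) k)
    (hside : (AdaptedFrom (P.MGLex ord) {it | P.IsAdapter ord it} a E ∧ P.target A_p = c) ∨
      JHist P α_p c) :
    PathInv P ord a c F := by
  have hAmshape : ∃ f tA, Am.1.feats = Feature.sel f :: tA := by
    cases hstep <;> exact ⟨_, _, rfl⟩
  obtain ⟨f, tA, hAmf⟩ := hAmshape
  have hIAm := inv_of_deriv P ord hWS hOrd hCRF hDAm
  rcases hIAm with ⟨Am₁, αm₁, hNm⟩ | ⟨Am₁, αm₁, ys, hXAm⟩ | ⟨A₀, α₀, Am₁, αm₁, Y, hXm⟩ | hL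
  · obtain ⟨hSDNF, S, hSm, hSr, hTS⟩ := merge_master_N P hWS hstep hNm hrp hB2p hB3p hB4p
    have hJ' : JHist P αm₁ c := by
      rcases hside with ⟨-, htc⟩ | hJ
      · exact ⟨αm₁, S, α_p, Relation.ReflTransGen.refl, hSm, hSr, hTS.trans htc⟩
      · exact jhist_step P hSr hSm hJ
    exact Or.inr (Or.inl ⟨Am₁, αm₁, Or.inl hSDNF, hJ'⟩)
  · exact absurd hAmf (fun h => sdxa_not_sel P hXAm h)
  · exact absurd hAmf (fun h => sdx_not_sel P hXm h)
  · obtain ⟨it, hAmeq, hsh | hsh⟩ := hL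
    · obtain ⟨hAdit, hsh'⟩ := hsh
      have hL2 : Am.2 = [] := by rw [hAmeq]
      have hsh'' : (∃ (c₀ : Cat) (aa : N), P.target aa = c₀ ∧
          Am.1.feats = [Feature.sel c₀, Feature.pos aa, Feature.cat c₀]) ∨
        (∃ (c₀ : Cat) (x : N) (ts : List N), P.target x = c₀ ∧ (∀ y ∈ ts, P.target y = c₀) ∧
          Am.1.feats = Feature.sel c₀ :: Feature.pos x :: ts.map Feature.pos ++
            [Feature.cat c₀, Feature.neg x]) := by
        rw [hAmeq]; exact hsh'
      obtain ⟨ys, hXAF⟩ := merge_master_AD P hstep hL2 hsh'' hrp hB2p hB3p hB4p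
      rcases hside with ⟨hAd, htc⟩ | hJ
      · refine Or.inl ⟨?_, Or.inr (Or.inl ⟨A_p, α_p, ys, hXAF, htc⟩)⟩
        refine AdaptedFrom.adapterMerge hAdit hAd ?_
        rw [← hAmeq]; exact hstep
      · exact Or.inr (Or.inl ⟨A_p, α_p, Or.inr ⟨ys, hXAF⟩, hJ⟩)
    · obtain ⟨A₁, α₁, Y, hsm, hr₁, hY, hnm, hfe⟩ := hsh
      have hL2 : Am.2 = [] := by rw [hAmeq]
      have hfe' : Am.1.feats = Feature.sel (P.target Y) :: Feature.pos Y ::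
          Feature.cat (P.target A₁) :: hsm.map Feature.neg := by
        rw [hAmeq]; exact hfe
      have hXF := merge_master_LR P hstep hL2 hr₁ hY hnm hfe' hrp hB2p hB3p hB4p
      have htY : P.target Y = P.target A_p := hXF.2.2.2.1
      rcases hside with ⟨-, htc⟩ | hJ
      · exact Or.inr (Or.inr ⟨A_p, α_p, A₁, α₁, Y, hXF, Or.inr (htY.trans htc)⟩)
      · exact Or.inr (Or.inr ⟨A_p, α_p, A₁, α₁, Y, hXF, Or.inl hJ⟩)

theorem path_step (hWS : P.WellShaped) (hOrd : P.OrdSpec ord) (hCRF : P.CatRecFree)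
    {a : MGExpr T Cat N} {c : Cat} {E F : MGExpr T Cat N}
    (hPI : PathInv P ord a c E) (hst : StepOf (P.MGLex ord) E F) :
    PathInv P ord a c F := by
  rcases hst with ⟨B, hDB, hstep⟩ | ⟨Am, hDAm, hstep⟩ | hmv
  · -- E is the merger
    have hAB : ∃ f tA tB, E.1.feats = Feature.sel f :: tA ∧ B.1.feats = Feature.cat f :: tB := by
      cases hstep <;> exact ⟨_, _, _, rfl, rfl⟩
    obtain ⟨f, tA, tB, hAf, hBf⟩ := hAB
    have hIB := inv_of_deriv P ord hWS hOrd hCRF hDB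
    obtain ⟨A', α', hs', hr', htA', ht₂, hB3, hB4⟩ := mergee_extract P ord hIB hBf
    have hB2 : B.1.feats = Feature.cat (P.target A') :: hs'.map Feature.neg := by
      rw [hBf, htA', ht₂]
    have hB3' : NegsOK P α' (P.target A') hs' := by rw [htA']; exact hB3
    have hB4' : ∀ k ∈ B.2, ChOK P α' (P.target A') k := by rw [htA']; exact hB4
    rcases hPI with ⟨hAd, hstate⟩ | hJ
    · rcases hstate with ⟨A, α, hN, htc⟩ | ⟨A, α, ys, hXA, htc⟩ |
        ⟨A₀, α₀, Am₁, αm₁, Y, hX, htc⟩ | ⟨hL, hcm⟩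
      · exact Or.inl ⟨AdaptedFrom.selfMerge hAd hDB hstep,
          Or.inl ⟨A, α, (merge_master_N P hWS hstep hN hr' hB2 hB3' hB4').1, htc⟩⟩
      · exact absurd hAf (fun h => sdxa_not_sel P hXA h)
      · exact absurd hAf (fun h => sdx_not_sel P hX h)
      · obtain ⟨it, hEeq, hsh | hsh⟩ := hL
        · obtain ⟨hAdit, hsh'⟩ := hsh
          have hL2 : E.2 = [] := by rw [hEeq]
          have hsh'' : (∃ (c₀ : Cat) (aa : N), P.target aa = c₀ ∧
              E.1.feats = [Feature.sel c₀, Feature.pos aa, Feature.cat c₀]) ∨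
            (∃ (c₀ : Cat) (x : N) (ts : List N), P.target x = c₀ ∧ (∀ y ∈ ts, P.target y = c₀) ∧
              E.1.feats = Feature.sel c₀ :: Feature.pos x :: ts.map Feature.pos ++
                [Feature.cat c₀, Feature.neg x]) := by
            rw [hEeq]; exact hsh'
          obtain ⟨ys, hXAF⟩ := merge_master_AD P hstep hL2 hsh'' hr' hB2 hB3' hB4'
          have htc' : P.target A' = c := by
            rcases hsh'' with ⟨c₀, aa, -, hfe⟩ | ⟨c₀, x, ts, -, -, hfe⟩ <;>
              rw [hfe] at hAf hcm
            · have hfc : f = c₀ := by injection hAf with h1 _; injection h1 with h1; exact h1.symm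
              have hcc : c = c₀ := by simpa using hcm
              rw [htA', hfc, hcc]
            · have hfc : f = c₀ := by
                rw [List.cons_append] at hAf
                injection hAf with h1 _; injection h1 with h1; exact h1.symm
              have hcc : c = c₀ := by simpa using hcm
              rw [htA', hfc, hcc]
          exact Or.inl ⟨AdaptedFrom.selfMerge hAd hDB hstep,
            Or.inr (Or.inl ⟨A', α', ys, hXAF, htc'⟩)⟩
        · obtain ⟨A₁, α₁, Y, hsm, hr₁, hY, hnm, hfe⟩ := hsh
          have hL2 : E.2 = [] := by rw [hEeq]
          have hfe' : E.1.feats = Feature.sel (P.target Y) :: Feature.pos Y ::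
              Feature.cat (P.target A₁) :: hsm.map Feature.neg := by
            rw [hEeq]; exact hfe
          have hXF := merge_master_LR P hstep hL2 hr₁ hY hnm hfe' hr' hB2 hB3' hB4'
          have htc₁ : P.target A₁ = c := by
            rw [hfe'] at hcm
            simp only [List.mem_cons] at hcm
            rcases hcm with h | h | h | h
            · exact absurd h (fun h => (nomatch h))
            · exact absurd h (fun h => (nomatch h))
            · injection h with h; exact h.symm
            · simp only [List.mem_map] at h
              obtain ⟨z, -, hz⟩ := h; exact absurd hz (fun h => (nomatch h))
          exact Or.inl ⟨AdaptedFrom.selfMerge hAd hDB hstep,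
            Or.inr (Or.inr (Or.inl ⟨A', α', A₁, α₁, Y, hXF, htc₁⟩))⟩
    · rcases hJ with ⟨A, α, hNor, hJh⟩ | ⟨A₀, α₀, Am₁, αm₁, Y, hX, hp⟩
      · rcases hNor with hN | ⟨ys, hXA⟩
        · exact Or.inr (Or.inl ⟨A, α,
            Or.inl (merge_master_N P hWS hstep hN hr' hB2 hB3' hB4').1, hJh⟩)
        · exact absurd hAf (fun h => sdxa_not_sel P hXA h)
      · exact absurd hAf (fun h => sdx_not_sel P hX h)
  · -- E is the mergee
    have hEshape : ∃ f tB, E.1.feats = Feature.cat f :: tB := by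
      cases hstep <;> exact ⟨_, _, rfl⟩
    obtain ⟨f, tB, hEf⟩ := hEshape
    rcases hPI with ⟨hAd, hstate⟩ | hJ
    · rcases hstate with ⟨A, α, hN, htc⟩ | ⟨A, α, ys, hXA, htc⟩ |
        ⟨A₀, α₀, Am₁, αm₁, Y, hX, htc⟩ | ⟨hL, hcm⟩
      · obtain ⟨-, hs_p, hB2p, hB3p, hB4p⟩ := sdn_mergee P hN hEf
        exact path_step_mergee P ord hWS hOrd hCRF hDAm hstep hN.1 hB2p hB3p hB4p
          (Or.inl ⟨hAd, htc⟩)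
      · obtain ⟨-, hs_p, hB2p, hB3p, hB4p⟩ := sdxa_mergee P hXA hEf
        exact path_step_mergee P ord hWS hOrd hCRF hDAm hstep hXA.1 hB2p hB3p hB4p
          (Or.inl ⟨hAd, htc⟩)
      · exact absurd hEf (fun h => sdx_not_cat P hX h)
      · exact absurd hEf (fun h => sdl_not_cat P ord hL h)
    · rcases hJ with ⟨A, α, hNor, hJh⟩ | ⟨A₀, α₀, Am₁, αm₁, Y, hX, hp⟩
      · rcases hNor with hN | ⟨ys, hXA⟩
        · obtain ⟨-, hs_p, hB2p, hB3p, hB4p⟩ := sdn_mergee P hN hEf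
          exact path_step_mergee P ord hWS hOrd hCRF hDAm hstep hN.1 hB2p hB3p hB4p
            (Or.inr hJh)
        · obtain ⟨-, hs_p, hB2p, hB3p, hB4p⟩ := sdxa_mergee P hXA hEf
          exact path_step_mergee P ord hWS hOrd hCRF hDAm hstep hXA.1 hB2p hB3p hB4p
            (Or.inr hJh)
      · exact absurd hEf (fun h => sdx_not_cat P hX h)
  · -- move
    have hEshape : ∃ f t, E.1.feats = Feature.pos f :: t := by
      cases hmv <;> exact ⟨_, _, rfl⟩
    obtain ⟨f, t, hEf⟩ := hEshape
    rcases hPI with ⟨hAd, hstate⟩ | hJ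
    · rcases hstate with ⟨A, α, hN, htc⟩ | ⟨A, α, ys, hXA, htc⟩ |
        ⟨A₀, α₀, Am₁, αm₁, Y, hX, htc⟩ | ⟨hL, hcm⟩
      · exact absurd hEf (fun h => sdn_not_pos P hN h)
      · cases ys with
        | nil =>
          exfalso
          obtain ⟨-, hs, hfe, -, -, -⟩ := hXA
          rw [hEf] at hfe
          rw [List.map_nil, List.nil_append] at hfe
          injection hfe with h1 _; exact (nomatch h1)
        | cons y ys' =>
          exact Or.inl ⟨AdaptedFrom.move hAd hmv,
            Or.inr (Or.inl ⟨A, α, ys', move_master_XA P hWS hCRF hmv hXA, htc⟩)⟩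
      · obtain ⟨-, hSDNF⟩ := move_master_X P hWS hCRF hmv hX
        exact Or.inl ⟨AdaptedFrom.move hAd hmv, Or.inl ⟨Am₁, αm₁, hSDNF, htc⟩⟩
      · exfalso
        obtain ⟨it, heq, -⟩ := hL
        cases hmv <;> simp [Prod.ext_iff] at heq
    · rcases hJ with ⟨A, α, hNor, hJh⟩ | ⟨A₀, α₀, Am₁, αm₁, Y, hX, hp⟩
      · rcases hNor with hN | ⟨ys, hXA⟩
        · exact absurd hEf (fun h => sdn_not_pos P hN h)
        · cases ys with
          | nil =>
            exfalso
            obtain ⟨-, hs, hfe, -, -, -⟩ := hXA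
            rw [hEf] at hfe
            rw [List.map_nil, List.nil_append] at hfe
            injection hfe with h1 _; exact (nomatch h1)
          | cons y ys' =>
            exact Or.inr (Or.inl ⟨A, α,
              Or.inr ⟨ys', move_master_XA P hWS hCRF hmv hXA⟩, hJh⟩)
      · have hYm : Sum.inl Y ∈ αm₁ := hX.2.2.1
        obtain ⟨hYr, hSDNF⟩ := move_master_X P hWS hCRF hmv hX
        have hJ' : JHist P αm₁ c := by
          rcases hp with hJ₀ | htYc
          · exact jhist_step P hYr hYm hJ₀
          · exact ⟨αm₁, Y, α₀, Relation.ReflTransGen.refl, hYm, hYr, htYc⟩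
        exact Or.inr (Or.inl ⟨Am₁, αm₁, Or.inl hSDNF, hJ'⟩)

end Main

end Stmt13

namespace Stmt13

variable {N T Cat : Type}

section Main

variable (P : PreppedCFG N T Cat) (ord : List (N ⊕ T) → Cat → List N)

theorem selpre_no_cat {α : List (N ⊕ T)} {pre : List (Feature Cat N)}
    (hSel : SelPre P α pre) : ∀ f ∈ pre, ∀ c' : Cat, f ≠ Feature.cat c' := by
  intro f hf c' h
  obtain ⟨S, hSe, -, -⟩ := hSel f hf
  rw [hSe] at h; exact (nomatch h)

theorem pospre_no_cat {ys : List N} :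
    ∀ f ∈ ys.map (Feature.pos : N → Feature Cat N), ∀ c' : Cat, f ≠ Feature.cat c' := by
  intro f hf c' h
  obtain ⟨z, -, rfl⟩ := List.mem_map.1 hf
  exact (nomatch h)

theorem path_base (hWS : P.WellShaped) (hOrd : P.OrdSpec ord) (hCRF : P.CatRecFree)
    {a : MGExpr T Cat N} {c : Cat} (ha : MGDeriv (P.MGLex ord) a)
    (hca : Feature.cat c ∈ a.1.feats) : PathInv P ord a c a := by
  have hI := inv_of_deriv P ord hWS hOrd hCRF ha
  rcases hI with ⟨A, α, hN⟩ | ⟨A, α, ys, hXA⟩ | ⟨A₀, α₀, Am, αm, Y, hX⟩ | hL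
  · refine Or.inl ⟨AdaptedFrom.refl a, Or.inl ⟨A, α, hN, ?_⟩⟩
    obtain ⟨-, pre, hs, hfe, hSel, -, -⟩ := hN
    rw [hfe] at hca
    exact (cat_eq_of_mem (selpre_no_cat P hSel) hca).symm
  · refine Or.inl ⟨AdaptedFrom.refl a, Or.inr (Or.inl ⟨A, α, ys, hXA, ?_⟩)⟩
    obtain ⟨-, hs, hfe, -, -, -⟩ := hXA
    rw [hfe] at hca
    exact (cat_eq_of_mem pospre_no_cat hca).symm
  · refine Or.inl ⟨AdaptedFrom.refl a, Or.inr (Or.inr (Or.inl ⟨A₀, α₀, Am, αm, Y, hX, ?_⟩))⟩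
    obtain ⟨-, -, -, -, hs, hfe, -, -⟩ := hX
    rw [hfe] at hca
    have hca' : Feature.cat c ∈ [Feature.pos Y] ++ Feature.cat (P.target Am) ::
        hs.map Feature.neg := hca
    refine (cat_eq_of_mem ?_ hca').symm
    intro f hf c' h
    rw [List.mem_singleton] at hf
    rw [hf] at h; exact (nomatch h)
  · exact Or.inl ⟨AdaptedFrom.refl a, Or.inr (Or.inr (Or.inr ⟨hL, hca⟩))⟩

theorem legal_pos_move {E : MGExpr T Cat N} (hleg : InLegalTree (P.MGLex ord) P.CFin E)
    {f : N} {t : List (Feature Cat N)} (hf : E.1.feats = Feature.pos f :: t) :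
    ∃ F, MoveStep E F := by
  obtain ⟨-, e, bb, hder⟩ := hleg
  rcases Relation.ReflTransGen.cases_head hder with heq | ⟨F, hstep, -⟩
  · exfalso
    rw [heq] at hf
    injection hf with h1 _; exact (nomatch h1)
  · rcases hstep with ⟨B, -, hstep⟩ | ⟨Am, -, hstep⟩ | hmv
    · exfalso
      have hsh : ∃ (f' : Cat) (tA : List (Feature Cat N)),
          E.1.feats = Feature.sel f' :: tA := by cases hstep <;> exact ⟨_, _, rfl⟩
      obtain ⟨f', tA, h⟩ := hsh
      rw [hf] at h; injection h with h1 _; exact (nomatch h1)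
    · exfalso
      have hsh : ∃ (f' : Cat) (tB : List (Feature Cat N)),
          E.1.feats = Feature.cat f' :: tB := by cases hstep <;> exact ⟨_, _, rfl⟩
      obtain ⟨f', tB, h⟩ := hsh
      rw [hf] at h; injection h with h1 _; exact (nomatch h1)
    · exact ⟨F, hmv⟩

theorem path_final (hWS : P.WellShaped) (hOrd : P.OrdSpec ord) (hCRF : P.CatRecFree)
    {a b : MGExpr T Cat N} {c : Cat} (hPI : PathInv P ord a c b)
    (hleg : InLegalTree (P.MGLex ord) P.CFin b) (hcb : Feature.cat c ∈ b.1.feats) :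
    AdaptedFrom (P.MGLex ord) {it | P.IsAdapter ord it} a b := by
  rcases hPI with ⟨hAd, -⟩ | hJ
  · exact hAd
  · exfalso
    rcases hJ with ⟨A, α, hNor, hJh⟩ | ⟨A₀, α₀, Am, αm, Y, hX, hp⟩
    · have hr : (A, α) ∈ P.rules := by
        rcases hNor with hN | ⟨ys, hXA⟩
        · exact hN.1
        · exact hXA.1
      have htc : P.target A = c := by
        rcases hNor with hN | ⟨ys, hXA⟩
        · obtain ⟨-, pre, hs, hfe, hSel, -, -⟩ := hN
          rw [hfe] at hcb
          exact (cat_eq_of_mem (selpre_no_cat P hSel) hcb).symm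
        · obtain ⟨-, hs, hfe, -, -, -⟩ := hXA
          rw [hfe] at hcb
          exact (cat_eq_of_mem pospre_no_cat hcb).symm
      exact jhist_false P hWS hCRF hr htc hJh
    · have hX' := hX
      obtain ⟨hr₀, hrm, hYm, hTY, hs, hfe, hNeg, hch⟩ := hX'
      have htc : P.target Am = c := by
        rw [hfe] at hcb
        have hcb' : Feature.cat c ∈ [Feature.pos Y] ++ Feature.cat (P.target Am) ::
            hs.map Feature.neg := hcb
        refine (cat_eq_of_mem ?_ hcb').symm
        intro g hg c' h
        rw [List.mem_singleton] at hg
        rw [hg] at h; exact (nomatch h)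
      obtain ⟨F, hmv⟩ := legal_pos_move P ord hleg hfe
      obtain ⟨hYr, -⟩ := move_master_X P hWS hCRF hmv hX
      have hJ' : JHist P αm c := by
        rcases hp with hJ₀ | htYc
        · exact jhist_step P hYr hYm hJ₀
        · exact ⟨αm, Y, α₀, Relation.ReflTransGen.refl, hYm, hYr, htYc⟩
      exact jhist_false P hWS hCRF hrm htc hJ'

end Main

end Stmt13

/-- category-recursions in MGs: let `I` be category-recursion free,
`a` an item of the constructed MG and `b` an item derived from `a` with
`𝒞(a) = 𝒞(b)` which is part of a legal derivation tree. Then `b` is an adapted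
derivation of `a`. -/
theorem stmt13 {N T Cat : Type} (P : PreppedCFG N T Cat)
    (ord : List (N ⊕ T) → Cat → List N)
    (hWS : P.WellShaped) (hOrd : P.OrdSpec ord) (hCRF : P.CatRecFree)
    (a b : MGExpr T Cat N)
    (ha : MGDeriv (P.MGLex ord) a)
    (hder : DerivedFrom (P.MGLex ord) a b)
    (hleg : InLegalTree (P.MGLex ord) P.CFin b)
    (hcat : ∃ c : Cat, Feature.cat c ∈ a.1.feats ∧ Feature.cat c ∈ b.1.feats) :
    AdaptedFrom (P.MGLex ord) {it | P.IsAdapter ord it} a b := by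
  obtain ⟨c, hca, hcb⟩ := hcat
  have hPI : Stmt13.PathInv P ord a c b := by
    clear hleg hcb
    induction hder with
    | refl => exact Stmt13.path_base P ord hWS hOrd hCRF ha hca
    | tail _ hstep ih => exact Stmt13.path_step P ord hWS hOrd hCRF ih hstep
  exact Stmt13.path_final P ord hWS hOrd hCRF hPI hleg hcb
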